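/- Assume ‖A‖₂ < 1. Then the IRLS iterates converge in functional value to the minimum: lim_{n→∞} F(x^n) = min_{x ∈ ℝ^N} F(x). -/

import Mathlib

open Finset Filter Matrix Topology

/-- Squared Euclidean residual plus generalized sparsity penalty:
`F(x) = ‖Ax - b‖₂² + 2 ∑ₖ λₖ |xₖ|^{qₖ}`. -/
noncomputable def Ffun {M N : ℕ} (A : Matrix (Fin M) (Fin N) ℝ) (b : Fin M → ℝ)
    (lam q : Fin N → ℝ) (x : Fin N → ℝ) : ℝ :=
  (∑ i, (A.mulVec x i - b i) ^ 2) + 2 * ∑ k, lam k * |x k| ^ (q k)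

/-- The surrogate functional `G(x,a,w,ε)`. -/
noncomputable def Gfun {M N : ℕ} (A : Matrix (Fin M) (Fin N) ℝ) (b : Fin M → ℝ)
    (lam q : Fin N → ℝ) (x a w : Fin N → ℝ) (ε : ℝ) : ℝ :=
  (∑ i, (A.mulVec x i - b i) ^ 2) - (∑ i, (A.mulVec (x - a) i) ^ 2)
    + (∑ k, (x k - a k) ^ 2)
    + ∑ k ∈ Finset.univ.filter (fun k => 1 ≤ q k ∧ q k < 2),
        lam k * (q k * w k * ((x k) ^ 2 + ε ^ 2)
          + (2 - q k) * (w k) ^ (q k / (q k - 2)))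
    + ∑ k ∈ Finset.univ.filter (fun k => q k = 2),
        2 * lam k * ((x k) ^ 2 + ε ^ 2) * ((w k) ^ 2 - 2 * w k + 2)

/-- Euclidean (ℓ²) norm on `Fin N → ℝ`. -/
noncomputable def l2 {N : ℕ} (v : Fin N → ℝ) : ℝ :=
  Real.sqrt (∑ k, (v k) ^ 2)

/-- Spectral (ℓ² operator) norm of a matrix. -/
noncomputable def specNorm {M N : ℕ} (A : Matrix (Fin M) (Fin N) ℝ) : ℝ :=
  ‖LinearMap.toContinuousLinearMap (Matrix.toEuclideanLin A)‖

/-! ### Auxiliary lemmas -/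

lemma sq_rpow_half (x r : ℝ) : ((x ^ 2 : ℝ)) ^ (r / 2) = |x| ^ r := by
  rw [← sq_abs, ← Real.rpow_natCast |x| 2, ← Real.rpow_mul (abs_nonneg x)]
  congr 1; ring

lemma tangent_upper {p u a : ℝ} (ha : 0 < a) (hu : 0 ≤ u) (hp0 : 0 ≤ p) (hp1 : p ≤ 1) :
    u ^ p ≤ a ^ p + p * a ^ (p - 1) * (u - a) := by
  have hs : (-1 : ℝ) ≤ u / a - 1 := by
    have : 0 ≤ u / a := div_nonneg hu ha.le
    linarith
  have hb := rpow_one_add_le_one_add_mul_self hs hp0 hp1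
  have hua : u = a * (1 + (u / a - 1)) := by field_simp; ring
  have h2 : u ^ p = a ^ p * (1 + (u / a - 1)) ^ p := by
    rw [← Real.mul_rpow ha.le (by linarith), ← hua]
  have h3 : a ^ p * (1 + (u / a - 1)) ^ p ≤ a ^ p * (1 + p * (u / a - 1)) :=
    mul_le_mul_of_nonneg_left hb (Real.rpow_nonneg ha.le p)
  have h4 : a ^ p * (1 + p * (u / a - 1)) = a ^ p + p * a ^ (p - 1) * (u - a) := by
    have : a ^ (p - 1) = a ^ p / a := by rw [Real.rpow_sub ha, Real.rpow_one]
    rw [this]; field_simp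
  linarith [h2, h3, h4.symm.le]

lemma tangent_lower {p u a : ℝ} (ha : 0 < a) (hu : 0 ≤ u) (hp : 1 ≤ p) :
    a ^ p + p * a ^ (p - 1) * (u - a) ≤ u ^ p := by
  have hs : (-1 : ℝ) ≤ u / a - 1 := by
    have : 0 ≤ u / a := div_nonneg hu ha.le
    linarith
  have hb := one_add_mul_self_le_rpow_one_add hs hp
  have hua : u = a * (1 + (u / a - 1)) := by field_simp; ring
  have h2 : u ^ p = a ^ p * (1 + (u / a - 1)) ^ p := by
    rw [← Real.mul_rpow ha.le (by linarith), ← hua]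
  have h3 : a ^ p * (1 + p * (u / a - 1)) ≤ a ^ p * (1 + (u / a - 1)) ^ p :=
    mul_le_mul_of_nonneg_left hb (Real.rpow_nonneg ha.le p)
  have h4 : a ^ p * (1 + p * (u / a - 1)) = a ^ p + p * a ^ (p - 1) * (u - a) := by
    have : a ^ (p - 1) = a ^ p / a := by rw [Real.rpow_sub ha, Real.rpow_one]
    rw [this]; field_simp
  linarith [h2, h3, h4.symm.le]

lemma abs_tangent {qq a y : ℝ} (hq : 1 ≤ qq) (ha : a ≠ 0) :
    |a| ^ qq + qq * |a| ^ (qq - 2) * a * (y - a) ≤ |y| ^ qq := by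
  have ha' : 0 < |a| := abs_pos.mpr ha
  have h := tangent_lower (p := qq) (u := |y|) (a := |a|) ha' (abs_nonneg y) hq
  have key : qq * |a| ^ (qq - 2) * a * (y - a) ≤ qq * |a| ^ (qq - 1) * (|y| - |a|) := by
    have h1 : |a| ^ (qq - 1) = |a| ^ (qq - 2) * |a| := by
      rw [← Real.rpow_add_one ha'.ne' (qq - 2)]; ring_nf
    have h2 : a * (y - a) ≤ |a| * (|y| - |a|) := by
      have : a * y ≤ |a| * |y| := by
        calc a * y ≤ |a * y| := le_abs_self _
        _ = |a| * |y| := abs_mul a y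
      nlinarith [sq_abs a]
    rw [h1]
    have hw : 0 ≤ qq * |a| ^ (qq - 2) := by positivity
    calc qq * |a| ^ (qq - 2) * a * (y - a) = qq * |a| ^ (qq - 2) * (a * (y - a)) := by ring
      _ ≤ qq * |a| ^ (qq - 2) * (|a| * (|y| - |a|)) := mul_le_mul_of_nonneg_left h2 hw
      _ = qq * (|a| ^ (qq - 2) * |a|) * (|y| - |a|) := by ring
  linarith

lemma scalar_quad {s a c xx : ℝ} (hs : 0 ≤ s) (hxx : (1 + s) * xx = a - c) :
    2 * (xx - a) ^ 2 + 2 * (xx - a) * c + s * xx ^ 2 - s * a ^ 2 ≤ 0 := by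
  have hc : c = a - (1 + s) * xx := by linarith
  subst hc
  nlinarith [sq_nonneg (xx - a), mul_nonneg hs (sq_nonneg (xx - a))]

lemma real_rpow_add_le {p a b : ℝ} (ha : 0 ≤ a) (hb : 0 ≤ b) (hp : 0 ≤ p) (hp1 : p ≤ 1) :
    (a + b) ^ p ≤ a ^ p + b ^ p := by
  have key := NNReal.coe_le_coe.2 (NNReal.rpow_add_le_add_rpow a.toNNReal b.toNNReal hp hp1)
  push_cast at key
  rwa [Real.coe_toNNReal _ ha, Real.coe_toNNReal _ hb] at key

lemma cross_sum {M N : ℕ} (A : Matrix (Fin M) (Fin N) ℝ) (u : Fin N → ℝ) (c : Fin M → ℝ) :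
    ∑ i, A.mulVec u i * c i = ∑ k, u k * Aᵀ.mulVec c k := by
  simp only [Matrix.mulVec, dotProduct, Matrix.transpose_apply, Finset.sum_mul,
    Finset.mul_sum]
  rw [Finset.sum_comm]
  exact Finset.sum_congr rfl fun k _ => Finset.sum_congr rfl fun i _ => by ring

lemma opnorm_bound {M N : ℕ} (A : Matrix (Fin M) (Fin N) ℝ)
    (h1 : ‖LinearMap.toContinuousLinearMap (Matrix.toEuclideanLin A)‖ ≤ 1)
    (z : Fin N → ℝ) : ∑ i, (A.mulVec z i) ^ 2 ≤ ∑ k, (z k) ^ 2 := by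
  set T := LinearMap.toContinuousLinearMap (Matrix.toEuclideanLin A)
  set v : EuclideanSpace ℝ (Fin N) := (WithLp.equiv 2 (Fin N → ℝ)).symm z
  have hTv : T v = (WithLp.equiv 2 (Fin M → ℝ)).symm (A.mulVec z) := by
    show Matrix.toEuclideanLin A v = _
    rw [Matrix.toEuclideanLin_apply]
    congr 1
  have hnv : ‖v‖ ^ 2 = ∑ k, (z k) ^ 2 := by
    rw [EuclideanSpace.norm_eq, Real.sq_sqrt (by positivity)]
    exact Finset.sum_congr rfl fun k _ => by
      simp [v, Real.norm_eq_abs, sq_abs, WithLp.equiv_symm_apply, PiLp.toLp_apply]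
  have hnTv : ‖T v‖ ^ 2 = ∑ i, (A.mulVec z i) ^ 2 := by
    rw [hTv, EuclideanSpace.norm_eq, Real.sq_sqrt (by positivity)]
    exact Finset.sum_congr rfl fun i _ => by
      simp [Real.norm_eq_abs, sq_abs, WithLp.equiv_symm_apply, PiLp.toLp_apply]
  have hle : ‖T v‖ ≤ ‖v‖ := by
    calc ‖T v‖ ≤ ‖T‖ * ‖v‖ := T.le_opNorm v
      _ ≤ 1 * ‖v‖ := mul_le_mul_of_nonneg_right h1 (norm_nonneg v)
      _ = ‖v‖ := one_mul _
  calc ∑ i, (A.mulVec z i) ^ 2 = ‖T v‖ ^ 2 := hnTv.symm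
    _ ≤ ‖v‖ ^ 2 := by nlinarith [norm_nonneg (T v), norm_nonneg v]
    _ = ∑ k, (z k) ^ 2 := hnv

lemma descent_step {M N : ℕ} (A : Matrix (Fin M) (Fin N) ℝ)
    (hA : ∀ z : Fin N → ℝ, ∑ i, (A.mulVec z i) ^ 2 ≤ ∑ k, (z k) ^ 2)
    (b : Fin M → ℝ) (lam q : Fin N → ℝ) (hlam : ∀ k, 0 < lam k)
    (hq : ∀ k, 1 ≤ q k ∧ q k ≤ 2)
    (a xx wn : Fin N → ℝ) (ε ε' : ℝ) (hε : 0 < ε) (hε' : ε' ≤ ε) (hε'0 : 0 ≤ ε')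
    (hwn : ∀ k, wn k = ((a k) ^ 2 + ε ^ 2) ^ ((q k - 2) / 2))
    (hxx : ∀ k, xx k = (1 + lam k * q k * wn k)⁻¹
        * (a k + Aᵀ.mulVec b k - Aᵀ.mulVec (A.mulVec a) k)) :
    ((∑ i, (A.mulVec xx i - b i) ^ 2) + 2 * ∑ k, lam k * ((xx k) ^ 2 + ε' ^ 2) ^ (q k / 2))
      + ∑ k, (xx k - a k) ^ 2
    ≤ (∑ i, (A.mulVec a i - b i) ^ 2) + 2 * ∑ k, lam k * ((a k) ^ 2 + ε ^ 2) ^ (q k / 2) := by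
  set cc : Fin N → ℝ := fun k => Aᵀ.mulVec (fun i => A.mulVec a i - b i) k with hcc
  have hbase : ∀ k, 0 < (a k) ^ 2 + ε ^ 2 := fun k =>
    add_pos_of_nonneg_of_pos (sq_nonneg _) (by positivity)
  have hwpos : ∀ k, 0 < wn k := fun k => by rw [hwn]; exact Real.rpow_pos_of_pos (hbase k) _
  have hs0 : ∀ k, 0 ≤ lam k * q k * wn k := fun k =>
    mul_nonneg (mul_nonneg (hlam k).le (by linarith [(hq k).1])) (hwpos k).le
  have hxx' : ∀ k, (1 + lam k * q k * wn k) * xx k = a k - cc k := by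
    intro k
    have h1 : (0:ℝ) < 1 + lam k * q k * wn k := by linarith [hs0 k]
    have h2 : cc k = Aᵀ.mulVec (A.mulVec a) k - Aᵀ.mulVec b k := by
      have : (fun i => A.mulVec a i - b i) = A.mulVec a - b := rfl
      rw [hcc]; simp only [this, Matrix.mulVec_sub, Pi.sub_apply]
    rw [hxx k, h2]
    field_simp
    ring
  have key : ∀ k, 2 * (lam k * ((xx k) ^ 2 + ε' ^ 2) ^ (q k / 2)) + (xx k - a k) ^ 2
      + ((xx k - a k) ^ 2 + 2 * (xx k - a k) * cc k)
      ≤ 2 * (lam k * ((a k) ^ 2 + ε ^ 2) ^ (q k / 2)) := by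
    intro k
    have hq1 := (hq k).1
    have hq2 := (hq k).2
    have stepA : ((xx k) ^ 2 + ε' ^ 2) ^ (q k / 2) ≤ ((xx k) ^ 2 + ε ^ 2) ^ (q k / 2) :=
      Real.rpow_le_rpow (by positivity) (by nlinarith) (by linarith)
    have hw_eq : ((a k) ^ 2 + ε ^ 2) ^ (q k / 2 - 1) = wn k := by
      rw [hwn]; congr 1; ring
    have stepB : ((xx k) ^ 2 + ε ^ 2) ^ (q k / 2)
        ≤ ((a k) ^ 2 + ε ^ 2) ^ (q k / 2)
          + q k / 2 * wn k * ((xx k) ^ 2 - (a k) ^ 2) := by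
      have h := tangent_upper (p := q k / 2) (u := (xx k) ^ 2 + ε ^ 2)
        (a := (a k) ^ 2 + ε ^ 2) (hbase k) (by positivity) (by linarith) (by linarith)
      rw [hw_eq] at h
      calc ((xx k) ^ 2 + ε ^ 2) ^ (q k / 2)
          ≤ ((a k) ^ 2 + ε ^ 2) ^ (q k / 2)
            + q k / 2 * wn k * ((xx k) ^ 2 + ε ^ 2 - ((a k) ^ 2 + ε ^ 2)) := h
        _ = _ := by ring
    have squad := scalar_quad (hs0 k) (hxx' k)
    nlinarith [mul_le_mul_of_nonneg_left stepA (hlam k).le,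
      mul_le_mul_of_nonneg_left stepB (hlam k).le, (hlam k).le]
  have hres : ∑ i, (A.mulVec xx i - b i) ^ 2
      = (∑ i, (A.mulVec (xx - a) i) ^ 2) + 2 * (∑ k, (xx k - a k) * cc k)
        + ∑ i, (A.mulVec a i - b i) ^ 2 := by
    have h1 : ∀ i, A.mulVec xx i - b i
        = A.mulVec (xx - a) i + (A.mulVec a i - b i) := by
      intro i
      rw [Matrix.mulVec_sub, Pi.sub_apply]
      ring
    have h2 : ∑ i, (A.mulVec xx i - b i) ^ 2
        = ∑ i, ((A.mulVec (xx - a) i) ^ 2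
          + 2 * (A.mulVec (xx - a) i * (A.mulVec a i - b i))
          + (A.mulVec a i - b i) ^ 2) := by
      refine Finset.sum_congr rfl fun i _ => ?_
      rw [h1 i]; ring
    rw [h2, Finset.sum_add_distrib, Finset.sum_add_distrib, ← Finset.mul_sum,
      cross_sum A (xx - a) (fun i => A.mulVec a i - b i)]
    simp only [Pi.sub_apply]
    rfl
  have hAle := hA (xx - a)
  have hsum : ∑ k, ((xx - a) k) ^ 2 = ∑ k, (xx k - a k) ^ 2 := by
    simp only [Pi.sub_apply]
  have total : ∑ k, (2 * (lam k * ((xx k) ^ 2 + ε' ^ 2) ^ (q k / 2)) + (xx k - a k) ^ 2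
      + ((xx k - a k) ^ 2 + 2 * (xx k - a k) * cc k))
      ≤ ∑ k, 2 * (lam k * ((a k) ^ 2 + ε ^ 2) ^ (q k / 2)) :=
    Finset.sum_le_sum fun k _ => key k
  have expand1 : ∑ k, (2 * (lam k * ((xx k) ^ 2 + ε' ^ 2) ^ (q k / 2)) + (xx k - a k) ^ 2
      + ((xx k - a k) ^ 2 + 2 * (xx k - a k) * cc k))
      = 2 * (∑ k, lam k * ((xx k) ^ 2 + ε' ^ 2) ^ (q k / 2)) + ∑ k, (xx k - a k) ^ 2
        + (∑ k, (xx k - a k) ^ 2 + 2 * ∑ k, (xx k - a k) * cc k) := by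
    rw [Finset.mul_sum, Finset.mul_sum]
    rw [Finset.sum_add_distrib, Finset.sum_add_distrib, Finset.sum_add_distrib]
    simp only [mul_assoc]
  have expand2 : ∑ k, 2 * (lam k * ((a k) ^ 2 + ε ^ 2) ^ (q k / 2))
      = 2 * ∑ k, lam k * ((a k) ^ 2 + ε ^ 2) ^ (q k / 2) := by
    rw [Finset.mul_sum]
  rw [expand1, expand2] at total
  rw [hres]
  rw [hsum] at hAle
  linarith


/-- if `‖A‖₂ < 1`, the IRLS iterates converge in functional value
to the minimum of `F`: `F(xⁿ) → min F`. -/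
theorem stmt_15 {M N : ℕ} (A : Matrix (Fin M) (Fin N) ℝ) (hA : specNorm A < 1)
    (b : Fin M → ℝ) (lam q : Fin N → ℝ)
    (hlam : ∀ k, 0 < lam k) (hq : ∀ k, 1 ≤ q k ∧ q k ≤ 2)
    (x : ℕ → Fin N → ℝ) (eps : ℕ → ℝ) (w : ℕ → Fin N → ℝ)
    (α : ℝ) (hα0 : 0 < α) (hα1 : α < 1) (heps0 : 0 < eps 0)
    (hw : ∀ n k, w n k = ((x n k) ^ 2 + (eps n) ^ 2) ^ ((q k - 2) / 2))
    (hxiter : ∀ n k, x (n + 1) k =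
      (1 + lam k * q k * w n k)⁻¹
        * (x n k + Aᵀ.mulVec b k - Aᵀ.mulVec (A.mulVec (x n)) k))
    (hepsiter : ∀ n, eps (n + 1) =
      min (eps n) (Real.sqrt (l2 (x (n + 1) - x n) + α ^ (n + 1)))) :
    ∃ xbar : Fin N → ℝ,
      (∀ y : Fin N → ℝ, Ffun A b lam q xbar ≤ Ffun A b lam q y) ∧
      Tendsto (fun n => Ffun A b lam q (x n)) atTop
        (nhds (Ffun A b lam q xbar)) := by
  -- basic positivity facts
  have hepspos : ∀ n, 0 < eps n := by
    intro n
    induction n with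
    | zero => exact heps0
    | succ n ih =>
      rw [hepsiter n]
      exact lt_min ih (Real.sqrt_pos.mpr
        (add_pos_of_nonneg_of_pos (Real.sqrt_nonneg _) (pow_pos hα0 _)))
  have hepsle : ∀ n, eps (n + 1) ≤ eps n := fun n => by
    rw [hepsiter n]; exact min_le_left _ _
  have hAb : ∀ z : Fin N → ℝ, ∑ i, (A.mulVec z i) ^ 2 ≤ ∑ k, (z k) ^ 2 :=
    opnorm_bound A hA.le
  -- the Lyapunov functional J and the squared step sizes D
  set J : ℕ → ℝ := fun n => (∑ i, (A.mulVec (x n) i - b i) ^ 2)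
    + 2 * ∑ k, lam k * ((x n k) ^ 2 + (eps n) ^ 2) ^ (q k / 2) with hJdef
  set D : ℕ → ℝ := fun n => ∑ k, (x (n + 1) k - x n k) ^ 2 with hDdef
  have hdes : ∀ n, J (n + 1) + D n ≤ J n := by
    intro n
    exact descent_step A hAb b lam q hlam hq (x n) (x (n + 1)) (w n)
      (eps n) (eps (n + 1)) (hepspos n) (hepsle n) (hepspos (n + 1)).le
      (hw n) (hxiter n)
  have hJ0 : ∀ n, 0 ≤ J n := by
    intro n
    rw [hJdef]
    have h1 : (0:ℝ) ≤ ∑ i, (A.mulVec (x n) i - b i) ^ 2 :=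
      Finset.sum_nonneg fun i _ => sq_nonneg _
    have h2 : (0:ℝ) ≤ ∑ k, lam k * ((x n k) ^ 2 + (eps n) ^ 2) ^ (q k / 2) :=
      Finset.sum_nonneg fun k _ => mul_nonneg (hlam k).le (Real.rpow_nonneg (by positivity) _)
    dsimp only
    linarith
  have hDnn : ∀ n, 0 ≤ D n := fun n => Finset.sum_nonneg fun k _ => sq_nonneg _
  have hJanti : Antitone J := antitone_nat_of_succ_le fun n => by
    have := hdes n; have := hDnn n; linarith
  have hJbdd : BddBelow (Set.range J) := ⟨0, fun y ⟨n, hn⟩ => hn ▸ hJ0 n⟩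
  have hJlim : Tendsto J atTop (𝓝 (⨅ n, J n)) := tendsto_atTop_ciInf hJanti hJbdd
  set Jstar := ⨅ n, J n with hJstar
  -- summability of step sizes
  have hsumD : ∀ n, ∑ i ∈ Finset.range n, D i ≤ J 0 := by
    intro n
    have key : ∀ n, (∑ i ∈ Finset.range n, D i) + J n ≤ J 0 := by
      intro n
      induction n with
      | zero => simp
      | succ n ih =>
        rw [Finset.sum_range_succ]
        have := hdes n
        linarith
    linarith [key n, hJ0 n]
  have hDsummable : Summable D := summable_of_sum_range_le hDnn hsumD
  have hDto0 : Tendsto D atTop (𝓝 0) := hDsummable.tendsto_atTop_zero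
  have hsqrtD : Tendsto (fun n => Real.sqrt (D n)) atTop (𝓝 0) := by
    have h := (Real.continuous_sqrt.tendsto 0).comp hDto0
    simpa [Function.comp_def] using h
  have hl2 : ∀ n, l2 (x (n + 1) - x n) = Real.sqrt (D n) := by
    intro n
    rw [hDdef]
    simp only [l2, Pi.sub_apply]
  -- eps tends to zero
  have hepsto0 : Tendsto eps atTop (𝓝 0) := by
    have hub : ∀ n, eps (n + 1) ≤ Real.sqrt (Real.sqrt (D n) + α ^ (n + 1)) := by
      intro n
      rw [hepsiter n, hl2 n]
      exact min_le_right _ _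
    have hαlim : Tendsto (fun n : ℕ => α ^ (n + 1)) atTop (𝓝 0) :=
      (tendsto_pow_atTop_nhds_zero_of_lt_one hα0.le hα1).comp (tendsto_add_atTop_nat 1)
    have hin : Tendsto (fun n => Real.sqrt (D n) + α ^ (n + 1)) atTop (𝓝 0) := by
      have := hsqrtD.add hαlim
      simpa using this
    have hupper : Tendsto (fun n => Real.sqrt (Real.sqrt (D n) + α ^ (n + 1))) atTop (𝓝 0) := by
      have h := (Real.continuous_sqrt.tendsto 0).comp hin
      simpa [Function.comp_def] using h
    have hshift : Tendsto (fun n => eps (n + 1)) atTop (𝓝 0) :=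
      tendsto_of_tendsto_of_tendsto_of_le_of_le tendsto_const_nhds hupper
        (fun n => (hepspos (n + 1)).le) hub
    exact (tendsto_add_atTop_iff_nat 1).mp hshift
  -- F(x n) converges to Jstar
  have hgap1 : ∀ n, Ffun A b lam q (x n) ≤ J n := by
    intro n
    have hk : ∀ k ∈ Finset.univ, lam k * |x n k| ^ (q k)
        ≤ lam k * ((x n k) ^ 2 + (eps n) ^ 2) ^ (q k / 2) := by
      intro k _
      apply mul_le_mul_of_nonneg_left _ (hlam k).le
      rw [← sq_rpow_half (x n k) (q k)]
      exact Real.rpow_le_rpow (sq_nonneg _) (by nlinarith [sq_nonneg (eps n)])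
        (by linarith [(hq k).1])
    have := Finset.sum_le_sum hk
    rw [hJdef]
    simp only [Ffun]
    linarith
  have hgap2 : ∀ n, J n ≤ Ffun A b lam q (x n) + 2 * ∑ k, lam k * (eps n) ^ (q k) := by
    intro n
    have hk : ∀ k ∈ Finset.univ, lam k * ((x n k) ^ 2 + (eps n) ^ 2) ^ (q k / 2)
        ≤ lam k * |x n k| ^ (q k) + lam k * (eps n) ^ (q k) := by
      intro k _
      have h1 : ((x n k) ^ 2 + (eps n) ^ 2) ^ (q k / 2)
          ≤ ((x n k) ^ 2) ^ (q k / 2) + ((eps n) ^ 2) ^ (q k / 2) :=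
        real_rpow_add_le (sq_nonneg _) (sq_nonneg _) (by linarith [(hq k).1])
          (by linarith [(hq k).2])
      rw [sq_rpow_half (x n k) (q k), sq_rpow_half (eps n) (q k),
        abs_of_pos (hepspos n)] at h1
      have := (hlam k).le
      nlinarith
    have := Finset.sum_le_sum hk
    rw [hJdef]
    simp only [Ffun]
    rw [Finset.sum_add_distrib] at this
    linarith
  have herr : Tendsto (fun n => 2 * ∑ k, lam k * (eps n) ^ (q k)) atTop (𝓝 0) := by
    have hk : ∀ k : Fin N, Tendsto (fun n => lam k * (eps n) ^ (q k)) atTop (𝓝 0) := by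
      intro k
      have hc : ContinuousAt (fun t : ℝ => t ^ (q k)) 0 :=
        Real.continuousAt_rpow_const 0 (q k) (Or.inr (by linarith [(hq k).1]))
      have h2 : Tendsto (fun n => (eps n) ^ (q k)) atTop (𝓝 ((0:ℝ) ^ (q k))) :=
        hc.tendsto.comp hepsto0
      rw [Real.zero_rpow (by linarith [(hq k).1] : q k ≠ 0)] at h2
      have := h2.const_mul (lam k)
      simpa using this
    have hsum : Tendsto (fun n => ∑ k, lam k * (eps n) ^ (q k)) atTop (𝓝 0) := by
      have := tendsto_finset_sum Finset.univ (fun k _ => hk k)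
      simpa using this
    have := hsum.const_mul 2
    simpa using this
  have hFJ : Tendsto (fun n => Ffun A b lam q (x n)) atTop (𝓝 Jstar) := by
    have hlow : Tendsto (fun n => J n - 2 * ∑ k, lam k * (eps n) ^ (q k)) atTop (𝓝 Jstar) := by
      have := hJlim.sub herr
      simpa using this
    exact tendsto_of_tendsto_of_tendsto_of_le_of_le hlow hJlim
      (fun n => by linarith [hgap2 n]) (fun n => hgap1 n)
  -- coordinatewise bound on iterates
  have hxbd : ∀ n k, |x n k| ≤ max 1 (J 0 / (2 * lam k)) := by
    intro n k
    have hterm : 2 * (lam k * |x n k| ^ (q k)) ≤ J 0 := by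
      have h1 : lam k * |x n k| ^ (q k) ≤ ∑ k', lam k' * |x n k'| ^ (q k') :=
        Finset.single_le_sum (f := fun k' => lam k' * |x n k'| ^ (q k'))
          (fun k' _ => mul_nonneg (hlam k').le (Real.rpow_nonneg (abs_nonneg _) _))
          (Finset.mem_univ k)
      have h2 : (0:ℝ) ≤ ∑ i, (A.mulVec (x n) i - b i) ^ 2 :=
        Finset.sum_nonneg fun i _ => sq_nonneg _
      have h3 := hgap1 n
      have h4 := hJanti (Nat.zero_le n)
      simp only [Ffun] at h3
      linarith
    by_cases hx1 : |x n k| ≤ 1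
    · exact le_trans hx1 (le_max_left _ _)
    · push_neg at hx1
      have h6 : |x n k| ^ (1:ℝ) ≤ |x n k| ^ (q k) :=
        Real.rpow_le_rpow_of_exponent_le hx1.le (hq k).1
      rw [Real.rpow_one] at h6
      have h7 : |x n k| ^ (q k) ≤ J 0 / (2 * lam k) := by
        rw [le_div_iff₀ (by have := hlam k; positivity)]
        nlinarith
      exact le_trans (le_trans h6 h7) (le_max_right _ _)
  set B : ℝ := 1 + ∑ k, max 1 (J 0 / (2 * lam k)) with hBdef
  have hB0 : 0 ≤ B := by
    have : (0:ℝ) ≤ ∑ k, max 1 (J 0 / (2 * lam k)) :=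
      Finset.sum_nonneg fun k _ => le_trans zero_le_one (le_max_left _ _)
    rw [hBdef]; linarith
  have hxball : ∀ n, x n ∈ Metric.closedBall (0 : Fin N → ℝ) B := by
    intro n
    rw [Metric.mem_closedBall, dist_zero_right, pi_norm_le_iff_of_nonneg hB0]
    intro k
    rw [Real.norm_eq_abs]
    calc |x n k| ≤ max 1 (J 0 / (2 * lam k)) := hxbd n k
      _ ≤ ∑ k', max 1 (J 0 / (2 * lam k')) :=
        Finset.single_le_sum (f := fun k' => max 1 (J 0 / (2 * lam k')))
          (fun k' _ => le_trans zero_le_one (le_max_left _ _)) (Finset.mem_univ k)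
      _ ≤ B := by rw [hBdef]; linarith
  -- the good set of indices is frequent
  have hSfreq : ∃ᶠ n in atTop, Real.sqrt (D n) ≤ (eps n) ^ 2 := by
    by_contra hcon
    rw [Filter.not_frequently] at hcon
    obtain ⟨n0, hn0⟩ := Filter.eventually_atTop.mp hcon
    have hconst : ∀ m, eps (n0 + m) = eps n0 := by
      intro m
      induction m with
      | zero => rfl
      | succ m ih =>
        have hmem := hn0 (n0 + m) (Nat.le_add_right _ _)
        push_neg at hmem
        have hle : eps (n0 + m) ≤ Real.sqrt (l2 (x (n0 + m + 1) - x (n0 + m)) + α ^ (n0 + m + 1)) := by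
          rw [hl2]
          have h1 : (eps (n0 + m)) ^ 2 ≤ Real.sqrt (D (n0 + m)) + α ^ (n0 + m + 1) := by
            have := pow_pos hα0 (n0 + m + 1)
            linarith [hmem.le]
          calc eps (n0 + m) = Real.sqrt ((eps (n0 + m)) ^ 2) :=
              (Real.sqrt_sq (hepspos _).le).symm
            _ ≤ _ := Real.sqrt_le_sqrt h1
        have heq : eps (n0 + m + 1) = eps (n0 + m) := by
          rw [hepsiter (n0 + m)]
          exact min_eq_left hle
        show eps (n0 + m + 1) = eps n0
        rw [heq, ih]
    have hcomp : Tendsto (fun m => eps (m + n0)) atTop (𝓝 0) :=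
      hepsto0.comp (tendsto_add_atTop_nat n0)
    have hfun : (fun m => eps (m + n0)) = fun _ => eps n0 :=
      funext fun m => by rw [Nat.add_comm]; exact hconst m
    rw [hfun] at hcomp
    have : eps n0 = 0 := tendsto_nhds_unique tendsto_const_nhds hcomp
    exact (hepspos n0).ne' this
  obtain ⟨φ₀, hφ₀mono, hφ₀S⟩ := Filter.extraction_of_frequently_atTop hSfreq
  obtain ⟨xbar, -, ψ, hψmono, hψlim⟩ :=
    tendsto_subseq_of_bounded Metric.isBounded_closedBall (fun j => hxball (φ₀ j))
  set φ : ℕ → ℕ := φ₀ ∘ ψ with hφdef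
  have hφmono : StrictMono φ := hφ₀mono.comp hψmono
  have hφS : ∀ j, Real.sqrt (D (φ j)) ≤ (eps (φ j)) ^ 2 := fun j => hφ₀S (ψ j)
  have hφlim : Tendsto (fun j => x (φ j)) atTop (𝓝 xbar) := hψlim
  have hφatTop : Tendsto φ atTop atTop := hφmono.tendsto_atTop
  have hxk : ∀ k, Tendsto (fun j => x (φ j) k) atTop (𝓝 (xbar k)) := fun k =>
    tendsto_pi_nhds.mp hφlim k
  have hepsφ : Tendsto (fun j => eps (φ j)) atTop (𝓝 0) := hepsto0.comp hφatTop
  have hsqrtDφ : Tendsto (fun j => Real.sqrt (D (φ j))) atTop (𝓝 0) := hsqrtD.comp hφatTop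
  have hΔbd : ∀ n k, |x (n + 1) k - x n k| ≤ Real.sqrt (D n) := by
    intro n k
    apply Real.abs_le_sqrt
    rw [hDdef]
    exact Finset.single_le_sum (f := fun k' => (x (n + 1) k' - x n k') ^ 2)
      (fun k' _ => sq_nonneg _) (Finset.mem_univ k)
  have hΔk : ∀ k, Tendsto (fun j => x (φ j + 1) k - x (φ j) k) atTop (𝓝 0) := by
    intro k
    exact squeeze_zero_norm
      (fun j => by rw [Real.norm_eq_abs]; exact hΔbd (φ j) k) hsqrtDφ
  have hx1k : ∀ k, Tendsto (fun j => x (φ j + 1) k) atTop (𝓝 (xbar k)) := by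
    intro k
    have h := (hΔk k).add (hxk k)
    simp only [sub_add_cancel, zero_add] at h
    exact h
  have hAcont : ∀ k, Tendsto (fun j => Aᵀ.mulVec (A.mulVec (x (φ j))) k) atTop
      (𝓝 (Aᵀ.mulVec (A.mulVec xbar) k)) := by
    intro k
    have hc : Continuous (fun z : Fin N → ℝ => Aᵀ.mulVec (A.mulVec z) k) := by
      simp only [Matrix.mulVec, dotProduct]
      apply continuous_finset_sum
      intro i _
      exact continuous_const.mul (continuous_finset_sum _ fun l _ =>
        continuous_const.mul (continuous_apply l))
    exact hc.continuousAt.tendsto.comp hφlim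
  set v : Fin N → ℝ := fun k => Aᵀ.mulVec b k - Aᵀ.mulVec (A.mulVec xbar) k with hvdef
  have hwpos : ∀ n k, 0 < w n k := by
    intro n k
    rw [hw n k]
    exact Real.rpow_pos_of_pos
      (add_pos_of_nonneg_of_pos (sq_nonneg _) (pow_pos (hepspos n) 2)) _
  have htv : ∀ k, Tendsto (fun j => lam k * q k * w (φ j) k * x (φ j + 1) k) atTop
      (𝓝 (v k)) := by
    intro k
    have hid : ∀ n, lam k * q k * w n k * x (n + 1) k
        = (x n k + Aᵀ.mulVec b k - Aᵀ.mulVec (A.mulVec (x n)) k) - x (n + 1) k := by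
      intro n
      have hs : (0:ℝ) < 1 + lam k * q k * w n k := by
        have := mul_pos (mul_pos (hlam k) (lt_of_lt_of_le one_pos (hq k).1)) (hwpos n k)
        linarith
      have h2 : (1 + lam k * q k * w n k) * x (n + 1) k
          = x n k + Aᵀ.mulVec b k - Aᵀ.mulVec (A.mulVec (x n)) k := by
        rw [hxiter n k]
        field_simp
      linear_combination h2
    have hlim : Tendsto (fun j => (x (φ j) k + Aᵀ.mulVec b k
        - Aᵀ.mulVec (A.mulVec (x (φ j))) k) - x (φ j + 1) k) atTop (𝓝 (v k)) := by
      have h1 := ((hxk k).add_const (Aᵀ.mulVec b k)).sub (hAcont k)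
      have h2 := h1.sub (hx1k k)
      have heq : xbar k + Aᵀ.mulVec b k - Aᵀ.mulVec (A.mulVec xbar) k - xbar k = v k := by
        rw [hvdef]; ring
      rw [heq] at h2
      exact h2
    have hfe : (fun j => lam k * q k * w (φ j) k * x (φ j + 1) k)
        = fun j => (x (φ j) k + Aᵀ.mulVec b k - Aᵀ.mulVec (A.mulVec (x (φ j))) k)
          - x (φ j + 1) k := funext fun j => hid (φ j)
    rw [hfe]
    exact hlim
  -- the subgradient inequality at xbar
  have hsub : ∀ (k : Fin N) (yk : ℝ),
      v k * (yk - xbar k) ≤ lam k * (|yk| ^ (q k) - |xbar k| ^ (q k)) := by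
    intro k yk
    have hq1 := (hq k).1
    have hq2 := (hq k).2
    by_cases hq2' : q k = 2
    · -- q = 2 : the weight is identically 1
      have hweq : ∀ n, w n k = 1 := by
        intro n
        rw [hw n k, hq2', show ((2:ℝ) - 2) / 2 = 0 by norm_num, Real.rpow_zero]
      have hfe : (fun j => lam k * q k * w (φ j) k * x (φ j + 1) k)
          = fun j => (lam k * 2) * x (φ j + 1) k := funext fun j => by
        rw [hweq, hq2']; ring
      have hlim2 : Tendsto (fun j => lam k * q k * w (φ j) k * x (φ j + 1) k) atTop
          (𝓝 (lam k * 2 * xbar k)) := by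
        rw [hfe]
        exact (hx1k k).const_mul _
      have hvk : v k = lam k * 2 * xbar k := tendsto_nhds_unique (htv k) hlim2
      have h1 : |yk| ^ (q k) = yk ^ 2 := by
        rw [hq2', show (2:ℝ) = ((2:ℕ):ℝ) by norm_num, Real.rpow_natCast, sq_abs]
      have h2 : |xbar k| ^ (q k) = (xbar k) ^ 2 := by
        rw [hq2', show (2:ℝ) = ((2:ℕ):ℝ) by norm_num, Real.rpow_natCast, sq_abs]
      rw [hvk, h1, h2]
      nlinarith [mul_nonneg (hlam k).le (sq_nonneg (yk - xbar k))]
    · have hqlt2 : q k < 2 := lt_of_le_of_ne hq2 hq2'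
      by_cases hxb : xbar k = 0
      · -- xbar k = 0 : bound |v k|
        have hbd : ∀ j, |lam k * q k * w (φ j) k * x (φ j + 1) k|
            ≤ lam k * q k * (((x (φ j) k) ^ 2 + (eps (φ j)) ^ 2) ^ ((q k - 1) / 2)
              + (eps (φ j)) ^ (q k)) := by
          intro j
          have hbase : 0 < (x (φ j) k) ^ 2 + (eps (φ j)) ^ 2 :=
            add_pos_of_nonneg_of_pos (sq_nonneg _) (pow_pos (hepspos _) 2)
          have hw' : w (φ j) k = ((x (φ j) k) ^ 2 + (eps (φ j)) ^ 2) ^ ((q k - 2) / 2) :=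
            hw (φ j) k
          have h1 : w (φ j) k * |x (φ j) k|
              ≤ ((x (φ j) k) ^ 2 + (eps (φ j)) ^ 2) ^ ((q k - 1) / 2) := by
            have hx2 : |x (φ j) k| ≤ ((x (φ j) k) ^ 2 + (eps (φ j)) ^ 2) ^ ((1:ℝ) / 2) := by
              rw [← Real.sqrt_eq_rpow, ← Real.sqrt_sq_eq_abs]
              exact Real.sqrt_le_sqrt (by nlinarith [sq_nonneg (eps (φ j))])
            calc w (φ j) k * |x (φ j) k|
                ≤ w (φ j) k * (((x (φ j) k) ^ 2 + (eps (φ j)) ^ 2) ^ ((1:ℝ) / 2)) :=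
                mul_le_mul_of_nonneg_left hx2 (hwpos _ k).le
              _ = ((x (φ j) k) ^ 2 + (eps (φ j)) ^ 2) ^ ((q k - 2) / 2 + (1:ℝ) / 2) := by
                rw [hw', ← Real.rpow_add hbase]
              _ = _ := by congr 1; ring
          have h2 : w (φ j) k * |x (φ j + 1) k - x (φ j) k| ≤ (eps (φ j)) ^ (q k) := by
            have hwle : w (φ j) k ≤ (eps (φ j)) ^ (q k - 2) := by
              rw [hw']
              calc ((x (φ j) k) ^ 2 + (eps (φ j)) ^ 2) ^ ((q k - 2) / 2)
                  ≤ ((eps (φ j)) ^ 2) ^ ((q k - 2) / 2) :=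
                    Real.rpow_le_rpow_of_nonpos (pow_pos (hepspos _) 2)
                      (by nlinarith [sq_nonneg (x (φ j) k)]) (by linarith)
                _ = |eps (φ j)| ^ (q k - 2) := sq_rpow_half _ _
                _ = (eps (φ j)) ^ (q k - 2) := by rw [abs_of_pos (hepspos _)]
            have hΔ : |x (φ j + 1) k - x (φ j) k| ≤ (eps (φ j)) ^ 2 :=
              le_trans (hΔbd (φ j) k) (hφS j)
            calc w (φ j) k * |x (φ j + 1) k - x (φ j) k|
                ≤ (eps (φ j)) ^ (q k - 2) * (eps (φ j)) ^ 2 :=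
                mul_le_mul hwle hΔ (abs_nonneg _) (Real.rpow_nonneg (hepspos _).le _)
              _ = (eps (φ j)) ^ (q k) := by
                rw [← Real.rpow_natCast (eps (φ j)) 2, ← Real.rpow_add (hepspos _)]
                congr 1; push_cast; ring
          have habs : |lam k * q k * w (φ j) k * x (φ j + 1) k|
              = lam k * q k * (w (φ j) k * |x (φ j + 1) k|) := by
            rw [abs_mul, abs_mul, abs_mul, abs_of_pos (hlam k),
              abs_of_pos (show (0:ℝ) < q k by linarith), abs_of_pos (hwpos _ k)]
            ring
          have htri : |x (φ j + 1) k| ≤ |x (φ j) k| + |x (φ j + 1) k - x (φ j) k| := by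
            calc |x (φ j + 1) k| = |x (φ j) k + (x (φ j + 1) k - x (φ j) k)| := by ring_nf
              _ ≤ _ := abs_add_le _ _
          rw [habs]
          apply mul_le_mul_of_nonneg_left _ (mul_nonneg (hlam k).le (by linarith))
          calc w (φ j) k * |x (φ j + 1) k|
              ≤ w (φ j) k * (|x (φ j) k| + |x (φ j + 1) k - x (φ j) k|) :=
              mul_le_mul_of_nonneg_left htri (hwpos _ k).le
            _ = w (φ j) k * |x (φ j) k| + w (φ j) k * |x (φ j + 1) k - x (φ j) k| := by ring
            _ ≤ _ := add_le_add h1 h2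
        have hEj : Tendsto (fun j => (eps (φ j)) ^ (q k)) atTop (𝓝 0) := by
          have hc : ContinuousAt (fun t : ℝ => t ^ (q k)) 0 :=
            Real.continuousAt_rpow_const 0 _ (Or.inr (by linarith))
          have h := hc.tendsto.comp hepsφ
          rwa [Real.zero_rpow (by linarith : q k ≠ 0)] at h
        have habsv : Tendsto (fun j => |lam k * q k * w (φ j) k * x (φ j + 1) k|) atTop
            (𝓝 |v k|) := (continuous_abs.tendsto _).comp (htv k)
        by_cases hq1' : q k = 1
        · -- q = 1
          have hBj : ∀ j, ((x (φ j) k) ^ 2 + (eps (φ j)) ^ 2) ^ ((q k - 1) / 2) = 1 := by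
            intro j
            rw [hq1', show ((1:ℝ) - 1) / 2 = 0 by norm_num, Real.rpow_zero]
          have hub : Tendsto (fun j => lam k * q k
              * (((x (φ j) k) ^ 2 + (eps (φ j)) ^ 2) ^ ((q k - 1) / 2)
                + (eps (φ j)) ^ (q k))) atTop (𝓝 (lam k * q k * (1 + 0))) := by
            apply Tendsto.const_mul
            have hone : Tendsto (fun j => ((x (φ j) k) ^ 2 + (eps (φ j)) ^ 2) ^ ((q k - 1) / 2))
                atTop (𝓝 1) := by
              have : (fun j => ((x (φ j) k) ^ 2 + (eps (φ j)) ^ 2) ^ ((q k - 1) / 2))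
                  = fun _ => (1:ℝ) := funext fun j => hBj j
              rw [this]
              exact tendsto_const_nhds
            exact hone.add hEj
          have hvle : |v k| ≤ lam k * q k * (1 + 0) :=
            le_of_tendsto_of_tendsto' habsv hub hbd
          rw [hq1'] at hvle
          rw [hxb, hq1']
          simp only [abs_zero, sub_zero]
          rw [Real.zero_rpow one_ne_zero, Real.rpow_one]
          have : v k * yk ≤ |v k| * |yk| := by
            calc v k * yk ≤ |v k * yk| := le_abs_self _
              _ = |v k| * |yk| := abs_mul _ _
          have h2 : |v k| * |yk| ≤ lam k * |yk| :=
            mul_le_mul_of_nonneg_right (by linarith) (abs_nonneg _)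
          linarith
        · -- 1 < q < 2
          have hq1lt : 1 < q k := lt_of_le_of_ne hq1 (Ne.symm hq1')
          have hbase0 : Tendsto (fun j => (x (φ j) k) ^ 2 + (eps (φ j)) ^ 2) atTop (𝓝 0) := by
            have h1 := (hxk k).pow 2
            have h2 := hepsφ.pow 2
            have h := h1.add h2
            rw [hxb] at h
            simpa using h
          have hBj0 : Tendsto (fun j => ((x (φ j) k) ^ 2 + (eps (φ j)) ^ 2) ^ ((q k - 1) / 2))
              atTop (𝓝 0) := by
            have hc : ContinuousAt (fun t : ℝ => t ^ ((q k - 1) / 2)) 0 :=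
              Real.continuousAt_rpow_const 0 _ (Or.inr (by linarith))
            have h := hc.tendsto.comp hbase0
            rwa [Real.zero_rpow (ne_of_gt (by linarith : (0:ℝ) < (q k - 1) / 2))] at h
          have hub : Tendsto (fun j => lam k * q k
              * (((x (φ j) k) ^ 2 + (eps (φ j)) ^ 2) ^ ((q k - 1) / 2)
                + (eps (φ j)) ^ (q k))) atTop (𝓝 (lam k * q k * (0 + 0))) :=
            Tendsto.const_mul _ (hBj0.add hEj)
          have hvle : |v k| ≤ lam k * q k * (0 + 0) :=
            le_of_tendsto_of_tendsto' habsv hub hbd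
          have hv0 : v k = 0 := by
            have h0 : |v k| ≤ 0 := by simpa using hvle
            exact abs_eq_zero.mp (le_antisymm h0 (abs_nonneg _))
          rw [hv0, hxb]
          simp only [abs_zero, sub_zero, zero_mul]
          rw [Real.zero_rpow (by linarith : q k ≠ 0)]
          have := mul_nonneg (hlam k).le (Real.rpow_nonneg (abs_nonneg yk) (q k))
          linarith
      · -- xbar k ≠ 0
        have hbase : Tendsto (fun j => (x (φ j) k) ^ 2 + (eps (φ j)) ^ 2) atTop
            (𝓝 ((xbar k) ^ 2)) := by
          have h1 := (hxk k).pow 2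
          have h2 := hepsφ.pow 2
          have h := h1.add h2
          simpa using h
        have hwlim : Tendsto (fun j => w (φ j) k) atTop (𝓝 (|xbar k| ^ (q k - 2))) := by
          have hc : ContinuousAt (fun t : ℝ => t ^ ((q k - 2) / 2)) ((xbar k) ^ 2) :=
            Real.continuousAt_rpow_const _ _ (Or.inl (pow_ne_zero 2 hxb))
          have h := hc.tendsto.comp hbase
          rw [sq_rpow_half (xbar k) (q k - 2)] at h
          have hfe : (fun j => w (φ j) k)
              = fun j => ((x (φ j) k) ^ 2 + (eps (φ j)) ^ 2) ^ ((q k - 2) / 2) :=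
            funext fun j => hw (φ j) k
          rw [hfe]
          exact h
        have hlim2 : Tendsto (fun j => lam k * q k * w (φ j) k * x (φ j + 1) k) atTop
            (𝓝 (lam k * q k * |xbar k| ^ (q k - 2) * xbar k)) :=
          (hwlim.const_mul (lam k * q k)).mul (hx1k k)
        have hvk : v k = lam k * q k * |xbar k| ^ (q k - 2) * xbar k :=
          tendsto_nhds_unique (htv k) hlim2
        have habs := abs_tangent (a := xbar k) (y := yk) (hq k).1 hxb
        rw [hvk]
        nlinarith [mul_le_mul_of_nonneg_left habs (hlam k).le]
  -- xbar is a global minimizer of F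
  have hmin : ∀ y : Fin N → ℝ, Ffun A b lam q xbar ≤ Ffun A b lam q y := by
    intro y
    have hres : ∑ i, (A.mulVec y i - b i) ^ 2
        = (∑ i, (A.mulVec (y - xbar) i) ^ 2)
          + 2 * (∑ k, (y k - xbar k) * (Aᵀ.mulVec (fun i => A.mulVec xbar i - b i) k))
          + ∑ i, (A.mulVec xbar i - b i) ^ 2 := by
      have h1 : ∀ i, A.mulVec y i - b i
          = A.mulVec (y - xbar) i + (A.mulVec xbar i - b i) := by
        intro i; rw [Matrix.mulVec_sub, Pi.sub_apply]; ring
      have h2 : ∑ i, (A.mulVec y i - b i) ^ 2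
          = ∑ i, ((A.mulVec (y - xbar) i) ^ 2
            + 2 * (A.mulVec (y - xbar) i * (A.mulVec xbar i - b i))
            + (A.mulVec xbar i - b i) ^ 2) :=
        Finset.sum_congr rfl fun i _ => by rw [h1 i]; ring
      rw [h2, Finset.sum_add_distrib, Finset.sum_add_distrib, ← Finset.mul_sum,
        cross_sum A (y - xbar) (fun i => A.mulVec xbar i - b i)]
      simp only [Pi.sub_apply]
    have hccv : ∀ k, Aᵀ.mulVec (fun i => A.mulVec xbar i - b i) k = - v k := by
      intro k
      have he : (fun i => A.mulVec xbar i - b i) = A.mulVec xbar - b := rfl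
      rw [he, Matrix.mulVec_sub, Pi.sub_apply]
      simp only [hvdef]
      ring
    have hpen : ∑ k, v k * (y k - xbar k)
        ≤ ∑ k, lam k * (|y k| ^ (q k) - |xbar k| ^ (q k)) :=
      Finset.sum_le_sum fun k _ => hsub k (y k)
    have hsq : (0:ℝ) ≤ ∑ i, (A.mulVec (y - xbar) i) ^ 2 :=
      Finset.sum_nonneg fun i _ => sq_nonneg _
    simp only [Ffun]
    rw [hres]
    have h3 : ∑ k, (y k - xbar k) * (Aᵀ.mulVec (fun i => A.mulVec xbar i - b i) k)
        = - ∑ k, v k * (y k - xbar k) := by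
      rw [← Finset.sum_neg_distrib]
      exact Finset.sum_congr rfl fun k _ => by rw [hccv k]; ring
    rw [h3]
    have h4 : ∑ k, lam k * (|y k| ^ (q k) - |xbar k| ^ (q k))
        = ∑ k, lam k * |y k| ^ (q k) - ∑ k, lam k * |xbar k| ^ (q k) := by
      rw [← Finset.sum_sub_distrib]
      exact Finset.sum_congr rfl fun k _ => by ring
    rw [h4] at hpen
    linarith
  -- continuity of F along the subsequence
  have hFcont : Tendsto (fun j => Ffun A b lam q (x (φ j))) atTop
      (𝓝 (Ffun A b lam q xbar)) := by
    have hres : Tendsto (fun j => ∑ i, (A.mulVec (x (φ j)) i - b i) ^ 2) atTop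
        (𝓝 (∑ i, (A.mulVec xbar i - b i) ^ 2)) := by
      apply tendsto_finset_sum
      intro i _
      have hmv : Tendsto (fun j => A.mulVec (x (φ j)) i) atTop (𝓝 (A.mulVec xbar i)) := by
        have hc : Continuous (fun z : Fin N → ℝ => A.mulVec z i) := by
          simp only [Matrix.mulVec, dotProduct]
          exact continuous_finset_sum _ fun l _ => continuous_const.mul (continuous_apply l)
        exact hc.continuousAt.tendsto.comp hφlim
      exact (hmv.sub_const (b i)).pow 2
    have hpen : Tendsto (fun j => ∑ k, lam k * |x (φ j) k| ^ (q k)) atTop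
        (𝓝 (∑ k, lam k * |xbar k| ^ (q k))) := by
      apply tendsto_finset_sum
      intro k _
      have habs : Tendsto (fun j => |x (φ j) k|) atTop (𝓝 (|xbar k|)) :=
        (continuous_abs.tendsto _).comp (hxk k)
      have hc : ContinuousAt (fun t : ℝ => t ^ (q k)) (|xbar k|) :=
        Real.continuousAt_rpow_const _ _ (Or.inr (by linarith [(hq k).1]))
      exact (hc.tendsto.comp habs).const_mul (lam k)
    have h := hres.add (hpen.const_mul 2)
    simpa [Ffun] using h
  -- conclusion
  refine ⟨xbar, hmin, ?_⟩
  have hsubx : Tendsto (fun j => Ffun A b lam q (x (φ j))) atTop (𝓝 Jstar) :=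
    hFJ.comp hφatTop
  have heq : Ffun A b lam q xbar = Jstar := tendsto_nhds_unique hFcont hsubx
  rw [heq]
  exact hFJ
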